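/- Let H be a nonunital RKHA with unitalization H̃. The spectrum of H̃ is the one-point compactification of the spectrum of H: σ(H̃) = {⟨·,1⟩ + χ ∘ p_H : χ ∈ σ(H)} ∪ {⟨·,1⟩}, where p_H is the orthogonal projection onto H, and the map Ψ(χ) = ⟨·,1⟩ + χ ∘ p_H is a homeomorphism of σ(H) onto its image in σ(H̃). -/

import Mathlib

open scoped ComplexInnerProductSpace

noncomputable section

/-- An abstract Hilbert tensor product structure: a bilinear map `tmul` whose
elementary tensors satisfy the inner product identity
`⟪a ⊗ b, c ⊗ d⟫ = ⟪a, c⟫ ⟪b, d⟫` and whose elementary tensors span a dense subspace. -/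
structure TensorLike (H K HT : Type*) [NormedAddCommGroup H] [InnerProductSpace ℂ H]
    [NormedAddCommGroup K] [InnerProductSpace ℂ K]
    [NormedAddCommGroup HT] [InnerProductSpace ℂ HT] where
  tmul : H →ₗ[ℂ] K →ₗ[ℂ] HT
  inner_tmul : ∀ (a c : H) (b d : K),
    ⟪tmul a b, tmul c d⟫ = ⟪a, c⟫ * ⟪b, d⟫
  dense_span : Dense (Submodule.span ℂ (Set.range fun p : H × K => tmul p.1 p.2) : Set HT)

/-- the spectrum of the unitalization `H̃ = ℂ ⊕ H` (realized via `P`, with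
multiplication `(a1⊕f)(b1⊕g) = ab1 ⊕ (ag + bf + fg)`) is the one-point compactification
of the spectrum of `H`: the map `Ψ(χ) = ⟨·,1⟩ + χ ∘ p_H` is a topological embedding of
`σ(H)` into `σ(H̃)`, and every character of `H̃` is either `Ψ(χ)` or the extra character
`⟨·,1⟩ : P(a,f) ↦ a`. -/
theorem stmt_13 {H HT Hu : Type*}
    [NormedAddCommGroup H] [InnerProductSpace ℂ H] [CompleteSpace H]
    [NormedAddCommGroup HT] [InnerProductSpace ℂ HT] [CompleteSpace HT]
    [NormedAddCommGroup Hu] [InnerProductSpace ℂ Hu] [CompleteSpace Hu]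
    (T : TensorLike H H HT) (Δ : H →L[ℂ] HT)
    (mH : H →L[ℂ] H →L[ℂ] H)
    (hmH : ∀ f g, mH f g = ContinuousLinearMap.adjoint Δ (T.tmul f g))
    (P : (ℂ × H) ≃ₗ[ℂ] Hu)
    (hP : ∀ (a b : ℂ) (f g : H),
      ⟪P (a, f), P (b, g)⟫ = (starRingEnd ℂ) a * b + ⟪f, g⟫)
    (mU : Hu →L[ℂ] Hu →L[ℂ] Hu)
    (hmU : ∀ (a b : ℂ) (f g : H),
      mU (P (a, f)) (P (b, g)) = P (a * b, a • g + b • f + mH f g)) :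
    ∃ Ψ : {χ : WeakDual ℂ H // χ ≠ 0 ∧ ∀ f g, χ (mH f g) = χ f * χ g} →
          {χ : WeakDual ℂ Hu // χ ≠ 0 ∧ ∀ u v, χ (mU u v) = χ u * χ v},
      (∀ χ (a : ℂ) (f : H), (Ψ χ).1 (P (a, f)) = a + χ.1 f) ∧
      Topology.IsEmbedding Ψ ∧
      (∀ μ : {χ : WeakDual ℂ Hu // χ ≠ 0 ∧ ∀ u v, χ (mU u v) = χ u * χ v},
        (∃ χ, Ψ χ = μ) ∨ ∀ (a : ℂ) (f : H), μ.1 (P (a, f)) = a) := by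
  classical
  -- the isometric inclusion j : H →L[ℂ] Hu, j f = P (0, f)
  set jL : H →ₗ[ℂ] Hu := P.toLinearMap.comp (LinearMap.inr ℂ ℂ H) with hjLdef
  have hjL_apply : ∀ f, jL f = P (0, f) := fun f => rfl
  have hjnorm : ∀ f : H, ‖jL f‖ ≤ 1 * ‖f‖ := by
    intro f
    have h1 : ⟪jL f, jL f⟫ = ⟪f, f⟫ := by
      rw [hjL_apply, hP]; simp
    rw [inner_self_eq_norm_sq_to_K, inner_self_eq_norm_sq_to_K] at h1
    have h2 : ‖jL f‖ ^ 2 = ‖f‖ ^ 2 := by exact_mod_cast h1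
    nlinarith [norm_nonneg (jL f), norm_nonneg f]
  set j : H →L[ℂ] Hu := jL.mkContinuous 1 hjnorm with hjdef
  have hj_apply : ∀ f, j f = P (0, f) := fun f => rfl
  -- the projection π : Hu →L[ℂ] H, π (P (a, f)) = f
  set π : Hu →L[ℂ] H := ContinuousLinearMap.adjoint j with hπdef
  have hπ : ∀ (a : ℂ) (f : H), π (P (a, f)) = f := by
    intro a f
    apply ext_inner_left ℂ
    intro g
    rw [hπdef, ContinuousLinearMap.adjoint_inner_right, hj_apply, hP]
    simp
  -- the functional E : Hu →L[ℂ] ℂ, E (P (a, f)) = a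
  set E : Hu →L[ℂ] ℂ := innerSL ℂ (P (1, 0)) with hEdef
  have hE : ∀ (a : ℂ) (f : H), E (P (a, f)) = a := by
    intro a f
    rw [hEdef, innerSL_apply_apply, hP]
    simp
  -- definition of Ψ at functional level
  set Ψ0 : {χ : WeakDual ℂ H // χ ≠ 0 ∧ ∀ f g, χ (mH f g) = χ f * χ g} →
      WeakDual ℂ Hu := fun χ => (E + (χ.1 : H →L[ℂ] ℂ).comp π : Hu →L[ℂ] ℂ) with hΨ0def
  have hΨ0 : ∀ χ (a : ℂ) (f : H), Ψ0 χ (P (a, f)) = a + χ.1 f := by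
    intro χ a f
    show E (P (a, f)) + (χ.1 : H →L[ℂ] ℂ) (π (P (a, f))) = a + χ.1 f
    rw [hE, hπ]
  have hrep : ∀ u : Hu, ∃ (a : ℂ) (f : H), u = P (a, f) :=
    fun u => ⟨(P.symm u).1, (P.symm u).2, by simp⟩
  have hΨmem : ∀ χ, Ψ0 χ ≠ 0 ∧ ∀ u v, Ψ0 χ (mU u v) = Ψ0 χ u * Ψ0 χ v := by
    intro χ
    constructor
    · intro h
      have h1 : Ψ0 χ (P (1, 0)) = 0 := by rw [h]; rfl
      rw [hΨ0 χ 1 0, map_zero] at h1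
      simp at h1
    · intro u v
      obtain ⟨a, f, rfl⟩ := hrep u
      obtain ⟨b, g, rfl⟩ := hrep v
      rw [hmU, hΨ0, hΨ0, hΨ0]
      have : χ.1 (a • g + b • f + mH f g) = a * χ.1 g + b * χ.1 f + χ.1 f * χ.1 g := by
        rw [map_add, map_add, map_smul, map_smul, χ.2.2]
        simp [smul_eq_mul]
      rw [this]; ring
  refine ⟨fun χ => ⟨Ψ0 χ, hΨmem χ⟩, fun χ a f => hΨ0 χ a f, ?_, ?_⟩
  · -- embedding
    have contΨ : Continuous fun χ : {χ : WeakDual ℂ H // χ ≠ 0 ∧ ∀ f g, χ (mH f g) = χ f * χ g} => Ψ0 χ := by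
      apply WeakBilin.continuous_of_continuous_eval
      intro u
      have h1 : Continuous fun χ : {χ : WeakDual ℂ H // χ ≠ 0 ∧ ∀ f g, χ (mH f g) = χ f * χ g} =>
          χ.1 (π u) := (WeakDual.eval_continuous (π u)).comp continuous_subtype_val
      have : (fun χ : {χ : WeakDual ℂ H // χ ≠ 0 ∧ ∀ f g, χ (mH f g) = χ f * χ g} =>
          (topDualPairing ℂ Hu) (Ψ0 χ) u) = fun χ => E u + χ.1 (π u) := rfl
      rw [this]
      exact continuous_const.add h1
    set Φ0 : {χ : WeakDual ℂ Hu // χ ≠ 0 ∧ ∀ u v, χ (mU u v) = χ u * χ v} → WeakDual ℂ H :=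
      fun μ => ((μ.1 : Hu →L[ℂ] ℂ).comp j : H →L[ℂ] ℂ) with hΦ0def
    have contΦ0 : Continuous Φ0 := by
      apply WeakBilin.continuous_of_continuous_eval
      intro f
      exact (WeakDual.eval_continuous (j f)).comp continuous_subtype_val
    have hcomp : (Φ0 ∘ fun χ => (⟨Ψ0 χ, hΨmem χ⟩ :
        {χ : WeakDual ℂ Hu // χ ≠ 0 ∧ ∀ u v, χ (mU u v) = χ u * χ v})) = Subtype.val := by
      funext χ
      apply DFunLike.ext
      intro f
      show Ψ0 χ (j f) = χ.1 f
      rw [hj_apply, hΨ0]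
      simp
    apply Topology.IsEmbedding.of_comp (Continuous.subtype_mk contΨ _) contΦ0
    rw [hcomp]
    exact Topology.IsEmbedding.subtypeVal
  · -- every character is Ψ χ or the point at infinity
    intro μ
    have hone : ∀ u : Hu, mU (P (1, 0)) u = u := by
      intro u
      obtain ⟨b, g, rfl⟩ := hrep u
      rw [hmU]
      simp
    have hunit : μ.1 (P (1, 0)) = 1 := by
      obtain ⟨u0, hu0⟩ : ∃ u, μ.1 u ≠ 0 := by
        by_contra h
        push_neg at h
        exact μ.2.1 (DFunLike.ext _ _ fun u => h u)
      have hthis := μ.2.2 (P (1, 0)) u0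
      rw [hone] at hthis
      have h2 : μ.1 (P (1, 0)) * μ.1 u0 = 1 * μ.1 u0 := by rw [one_mul]; exact hthis.symm
      exact mul_right_cancel₀ hu0 h2
    have hval : ∀ (a : ℂ) (f : H), μ.1 (P (a, f)) = a + μ.1 (P (0, f)) := by
      intro a f
      have hdecomp : P ((a : ℂ), f) = a • P (1, 0) + P (0, f) := by
        rw [← map_smul, ← map_add]
        congr 1
        simp [Prod.ext_iff]
      rw [hdecomp, map_add, map_smul, hunit]
      simp [smul_eq_mul]
    by_cases hχ : (((μ.1 : Hu →L[ℂ] ℂ).comp j : H →L[ℂ] ℂ) : WeakDual ℂ H) = 0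
    · right
      intro a f
      have h0 : μ.1 (P (0, f)) = 0 := by
        have := congrArg (fun ψ : WeakDual ℂ H => ψ f) hχ
        exact this
      rw [hval, h0, add_zero]
    · left
      have hmul : ∀ f g, (((μ.1 : Hu →L[ℂ] ℂ).comp j : H →L[ℂ] ℂ) : WeakDual ℂ H) (mH f g) =
          (((μ.1 : Hu →L[ℂ] ℂ).comp j : H →L[ℂ] ℂ) : WeakDual ℂ H) f *
          (((μ.1 : Hu →L[ℂ] ℂ).comp j : H →L[ℂ] ℂ) : WeakDual ℂ H) g := by
        intro f g
        show μ.1 (j (mH f g)) = μ.1 (j f) * μ.1 (j g)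
        have h1 : j (mH f g) = mU (j f) (j g) := by
          rw [hj_apply, hj_apply, hj_apply, hmU]
          simp
        rw [h1, μ.2.2]
      refine ⟨⟨_, hχ, hmul⟩, ?_⟩
      apply Subtype.ext
      apply DFunLike.ext
      intro u
      obtain ⟨a, f, rfl⟩ := hrep u
      show Ψ0 _ (P (a, f)) = μ.1 (P (a, f))
      rw [hΨ0, hval]
      rfl
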